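/- Let A be a C*-algebra and (e_n) a sequence of positive norm-one elements with e_n e_{n+1} = e_{n+1} for all n. Then the sets K_n := {f ∈ A* : ‖f‖ ≤ 1, f ≥ 0, f(e_n) = 1} form a decreasing sequence of non-empty weak-* compact faces of the state space of A, and their intersection contains a pure state φ (so φ(e_n) = 1 for all n). -/

import Mathlib

open scoped ComplexOrder ComplexInnerProductSpace
open Filter Topology

noncomputable section

section KSets

variable {A : Type*} [NormedRing A] [StarRing A] [NormedAlgebra ℂ A] [PartialOrder A]

/-- The set `K_e` of positive functionals of norm at most one with `f e = 1`, inside the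
weak-* dual. -/
def stateKSet (e : A) : Set (WeakDual ℂ A) :=
  {f | (∀ a : A, ‖f a‖ ≤ ‖a‖) ∧ (∀ a : A, 0 ≤ a → 0 ≤ f a) ∧ f e = 1}

/-- The state space of the unital C*-algebra `A`, inside the weak-* dual. -/
def stateSetW : Set (WeakDual ℂ A) :=
  {f | (∀ a : A, ‖f a‖ ≤ ‖a‖) ∧ (∀ a : A, 0 ≤ a → 0 ≤ f a) ∧ f 1 = 1}

end KSets

namespace StateAux

lemma isClosed_nonnegC : IsClosed {z : ℂ | 0 ≤ z} := by
  have h : {z : ℂ | 0 ≤ z} = Complex.re ⁻¹' (Set.Ici 0) ∩ Complex.im ⁻¹' {0} := by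
    ext z
    simp [Complex.le_def, eq_comm]
  rw [h]
  exact (isClosed_Ici.preimage Complex.continuous_re).inter
    (isClosed_singleton.preimage Complex.continuous_im)

variable {A : Type*} [NormedRing A] [StarRing A] [CStarRing A] [NormedAlgebra ℂ A]
    [StarModule ℂ A] [PartialOrder A] [StarOrderedRing A] [CompleteSpace A]

/-- A norm-contractive functional with `f 1 = 1` is positive. -/
lemma positive_of_norm_le [Nontrivial A] (f : WeakDual ℂ A)
    (hb : ∀ a : A, ‖f a‖ ≤ ‖a‖) (h1 : f 1 = 1) {a : A} (ha : 0 ≤ a) : 0 ≤ f a := by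
  letI : CStarAlgebra A :=
    { ‹NormedRing A›, ‹StarRing A›, ‹CStarRing A›, ‹NormedAlgebra ℂ A›, ‹StarModule ℂ A›,
      ‹CompleteSpace A› with }
  have sa : IsSelfAdjoint a := .of_nonneg ha
  set z := f a with hz
  have him : ∀ t : ℝ, z.re ^ 2 + z.im ^ 2 + 2 * t * z.im ≤ ‖a‖ ^ 2 := by
    intro t
    set c : ℂ := (t : ℂ) * Complex.I with hc
    set b : A := a + c • (1 : A) with hbdef
    have hcc : c * -c = ((t : ℂ))^2 := by
      rw [hc]; ring_nf; rw [Complex.I_sq]; ring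
    have hstar : star b * b = a * a + ((t : ℂ)^2) • (1 : A) := by
      have h1' : star b = a + (-c) • (1 : A) := by
        simp [hbdef, star_smul, sa.star_eq, hc, Complex.ext_iff]
      rw [h1', hbdef]
      simp only [add_mul, mul_add, smul_add, mul_smul_comm, smul_mul_assoc, one_mul, mul_one,
        smul_smul]
      rw [hcc, neg_smul]
      abel
    have hnb2 : ‖b‖ ^ 2 ≤ ‖a‖ ^ 2 + t ^ 2 := by
      have h2 : ‖b‖ ^ 2 = ‖star b * b‖ := by
        rw [CStarRing.norm_star_mul_self]; ring
      rw [h2, hstar]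
      have h3 : ‖a * a‖ = ‖a‖ ^ 2 := by
        nth_rewrite 1 [← sa.star_eq]
        rw [CStarRing.norm_star_mul_self]; ring
      calc ‖a * a + ((t:ℂ)^2) • (1:A)‖ ≤ ‖a * a‖ + ‖((t:ℂ)^2) • (1:A)‖ := norm_add_le _ _
        _ ≤ ‖a‖ ^ 2 + t ^ 2 := by
            rw [h3, norm_smul, norm_one, mul_one]
            simp [← Complex.ofReal_pow]
    have hfb : f b = z + c := by
      rw [hbdef, map_add, map_smul, h1, smul_eq_mul, mul_one]
    have hineq : ‖f b‖ ^ 2 ≤ ‖b‖ ^ 2 := by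
      have := hb b
      nlinarith [norm_nonneg (f b), norm_nonneg b]
    rw [hfb] at hineq
    have hsq : ‖z + c‖ ^ 2 = z.re ^ 2 + (z.im + t) ^ 2 := by
      rw [Complex.sq_norm]
      simp [Complex.normSq_apply, hc]
      ring
    nlinarith [hnb2]
  have him0 : z.im = 0 := by
    by_contra h
    have h2 : (2:ℝ) * z.im ≠ 0 := mul_ne_zero two_ne_zero h
    set t := (‖a‖^2 + 1 - z.re^2 - z.im^2) / (2 * z.im) with htdef
    have ht := him t
    rw [show 2 * t * z.im = ‖a‖^2 + 1 - z.re^2 - z.im^2 by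
      rw [htdef]; field_simp] at ht
    linarith
  have hre : 0 ≤ z.re := by
    set r := ‖a‖ with hrdef
    have hcfc : a - algebraMap ℝ A (r/2) = cfc (fun x : ℝ => x - r/2) a := by
      rw [cfc_sub (fun x : ℝ => x) (fun _ => r/2) a, cfc_id' ℝ a, cfc_const (r/2) a]
    have hnc : ‖a - algebraMap ℝ A (r/2)‖ ≤ r/2 := by
      rw [hcfc]
      refine norm_cfc_le (by positivity) fun x hx => ?_
      have hx0 : 0 ≤ x := spectrum_nonneg_of_nonneg ha hx
      have hx1 : x ≤ r := by
        have := spectrum.norm_le_norm_of_mem hx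
        rwa [Real.norm_eq_abs, abs_of_nonneg hx0] at this
      rw [Real.norm_eq_abs, abs_le]
      constructor <;> linarith
    have hfc : f (a - algebraMap ℝ A (r/2)) = z - ((r/2 : ℝ) : ℂ) := by
      rw [map_sub, ← hz]
      congr 1
      rw [IsScalarTower.algebraMap_apply ℝ ℂ A, Algebra.algebraMap_eq_smul_one, map_smul, h1,
        smul_eq_mul, mul_one]
      exact congrFun Complex.coe_algebraMap (r/2)
    have h5 := (hb _).trans hnc
    rw [hfc] at h5
    have h6 : ‖z - ((r/2 : ℝ):ℂ)‖^2 = (z.re - r/2)^2 + z.im^2 := by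
      rw [Complex.sq_norm]
      simp [Complex.normSq_apply]
      ring
    nlinarith [norm_nonneg (z - ((r/2:ℝ):ℂ))]
  rw [Complex.le_def]
  exact ⟨by simpa using hre, by simpa using him0.symm⟩

end StateAux

namespace StateAux2
variable {A : Type*} [NormedRing A] [StarRing A] [CStarRing A] [NormedAlgebra ℂ A]
    [StarModule ℂ A] [PartialOrder A] [StarOrderedRing A] [CompleteSpace A]

/-- a positive element of norm at most one is `≤ 1`. -/
lemma le_one_of_norm_le_one {q : A} (hq : 0 ≤ q) (hqn : ‖q‖ = 1) : q ≤ 1 := by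
  letI : CStarAlgebra A :=
    { ‹NormedRing A›, ‹StarRing A›, ‹CStarRing A›, ‹NormedAlgebra ℂ A›, ‹StarModule ℂ A›,
      ‹CompleteSpace A› with }
  have h := IsSelfAdjoint.le_algebraMap_norm_self (a := q) (.of_nonneg hq)
  rwa [hqn, map_one] at h

lemma le_of_absorb {p q : A} (hp : 0 ≤ p) (hq : 0 ≤ q) (hpn : ‖p‖ = 1) (hqn : ‖q‖ = 1)
    (h : q * p = p) : p ≤ q := by
  letI : CStarAlgebra A :=
    { ‹NormedRing A›, ‹StarRing A›, ‹CStarRing A›, ‹NormedAlgebra ℂ A›, ‹StarModule ℂ A›,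
      ‹CompleteSpace A› with }
  have hsp : IsSelfAdjoint p := .of_nonneg hp
  have hsq : IsSelfAdjoint q := .of_nonneg hq
  have hp1 : p ≤ 1 := le_one_of_norm_le_one hp hpn
  have hq1 : q ≤ 1 := le_one_of_norm_le_one hq hqn
  have hpq : p * q = p := by
    calc p * q = star (q * p) := by rw [star_mul, hsp.star_eq, hsq.star_eq]
      _ = star p := by rw [h]
      _ = p := hsp.star_eq
  have h2 : p ≤ q * q := by
    calc p = q * p * q := by rw [h, hpq]
      _ = star q * p * q := by rw [hsq.star_eq]
      _ ≤ star q * 1 * q := star_left_conjugate_le_conjugate hp1 q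
      _ = q * q := by rw [hsq.star_eq, mul_one]
  have h3 : q * q ≤ q := by
    set s := CFC.sqrt q with hsdef
    have hs : 0 ≤ s := CFC.sqrt_nonneg q
    have hss : s * s = q := CFC.sqrt_mul_sqrt_self q hq
    have hsa : IsSelfAdjoint s := .of_nonneg hs
    calc q * q = star s * q * s := by rw [hsa.star_eq, ← hss]; simp [mul_assoc]
      _ ≤ star s * 1 * s := star_left_conjugate_le_conjugate hq1 s
      _ = q := by rw [hsa.star_eq, mul_one, hss]
  exact h2.trans h3

/-- monotone-type consequence: if `f p = 1`, `p ≤ q`, `‖q‖ ≤ 1` then `f q = 1`. -/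
lemma apply_eq_one_of_le (f : WeakDual ℂ A) (hb : ∀ a : A, ‖f a‖ ≤ ‖a‖)
    (hpos : ∀ a : A, 0 ≤ a → 0 ≤ f a) {p q : A} (hfp : f p = 1) (hpq : p ≤ q)
    (hqn : ‖q‖ ≤ 1) : f q = 1 := by
  have h1 : 0 ≤ f (q - p) := hpos _ (sub_nonneg.mpr hpq)
  rw [map_sub, hfp] at h1
  rw [Complex.le_def] at h1
  simp only [Complex.zero_re, Complex.zero_im, Complex.sub_re, Complex.sub_im,
    Complex.one_re, Complex.one_im] at h1
  have h2 : ‖f q‖ ≤ 1 := (hb q).trans hqn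
  have h3 : (f q).re ≤ 1 := by
    calc (f q).re ≤ |(f q).re| := le_abs_self _
      _ ≤ ‖f q‖ := Complex.abs_re_le_norm _
      _ ≤ 1 := h2
  have h4 : (f q).im = 0 := by linarith [h1.2]
  have h5 : (f q).re = 1 := by linarith [h1.1]
  rw [Complex.ext_iff]
  simp [h4, h5]

end StateAux2

namespace StateAux3
variable {A : Type*} [NormedRing A] [StarRing A] [CStarRing A] [NormedAlgebra ℂ A]
    [StarModule ℂ A] [PartialOrder A] [StarOrderedRing A] [CompleteSpace A]

lemma exists_norm_le_one_map_one (a : A) (hpos : 0 ≤ a) (hnorm : ‖a‖ = 1)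
    (hA : Nontrivial A) :
    ∃ F : WeakDual ℂ A, (∀ x : A, ‖F x‖ ≤ ‖x‖) ∧ F 1 = 1 ∧ F a = 1 := by
  letI : CStarAlgebra A :=
    { ‹NormedRing A›, ‹StarRing A›, ‹CStarRing A›, ‹NormedAlgebra ℂ A›, ‹StarModule ℂ A›,
      ‹CompleteSpace A› with }
  have hsa : IsSelfAdjoint a := .of_nonneg hpos
  haveI : IsStarNormal a := hsa.isStarNormal
  have h1sp : (1 : ℂ) ∈ spectrum ℂ a := by
    have h := CStarAlgebra.norm_mem_spectrum_of_nonneg hpos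
    rw [hnorm] at h
    simpa using spectrum.algebraMap_mem ℂ h
  set B := StarAlgebra.elemental ℂ a with hBdef
  haveI : Nontrivial B := ⟨1, 0, by
    intro hcontra
    exact one_ne_zero (congrArg Subtype.val hcontra)⟩
  set φ : WeakDual.characterSpace ℂ B :=
    (StarAlgebra.elemental.characterSpaceHomeo a).symm ⟨1, h1sp⟩ with hφdef
  have hφa : φ ⟨a, StarAlgebra.elemental.self_mem ℂ a⟩ = 1 := by
    have h := (StarAlgebra.elemental.characterSpaceHomeo a).apply_symm_apply ⟨1, h1sp⟩
    have h2 := congrArg Subtype.val h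
    exact h2
  have hφle : ∀ x : B, ‖φ x‖ ≤ ‖x‖ := fun x => AlgHom.norm_apply_le_self φ x
  set p : Subspace ℂ A := Subalgebra.toSubmodule B.toSubalgebra with hpdef
  have hmem : ∀ x : p, (x : A) ∈ B := fun x => x.2
  let l : p →ₗ[ℂ] ℂ :=
    { toFun := fun x => φ ⟨x.1, x.2⟩
      map_add' := fun x y => by
        rw [← map_add]
        congr 1
      map_smul' := fun c x => by
        rw [← map_smul]
        congr 1 }
  have hl : ∀ x : p, ‖l x‖ ≤ 1 * ‖x‖ := by
    intro x
    rw [one_mul]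
    exact hφle ⟨x.1, x.2⟩
  let f0 : p →L[ℂ] ℂ := LinearMap.mkContinuous l 1 hl
  obtain ⟨g, hg, hgn⟩ := exists_extension_norm_eq p f0
  have hgle : ‖g‖ ≤ 1 := by
    rw [hgn]
    exact LinearMap.mkContinuous_norm_le l zero_le_one hl
  refine ⟨StrongDual.toWeakDual g, fun x => ?_, ?_, ?_⟩
  · calc ‖g x‖ ≤ ‖g‖ * ‖x‖ := g.le_opNorm x
      _ ≤ 1 * ‖x‖ := mul_le_mul_of_nonneg_right hgle (norm_nonneg x)
      _ = ‖x‖ := one_mul _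
  · have h1m : (1 : A) ∈ p := B.one_mem'
    have h := hg ⟨1, h1m⟩
    show g (1:A) = 1
    exact h.trans (map_one φ)
  · have ham : a ∈ p := StarAlgebra.elemental.self_mem ℂ a
    have h := hg ⟨a, ham⟩
    show g a = 1
    exact h.trans hφa

end StateAux3

/-- for a sequence `(e n)` of positive norm-one elements with
`e n * e (n+1) = e (n+1)`, the sets `K n = {f : ‖f‖ ≤ 1, f ≥ 0, f (e n) = 1}` form a
decreasing sequence of non-empty weak-* compact faces of the state space, whose
intersection contains a pure state `φ` (so `φ (e n) = 1` for all `n`). -/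

theorem decreasing_compact_faces_contain_pure_state
    {A : Type*} [NormedRing A] [StarRing A] [CStarRing A] [NormedAlgebra ℂ A]
    [StarModule ℂ A] [PartialOrder A] [StarOrderedRing A] [CompleteSpace A]
    (e : ℕ → A) (hpos : ∀ n, 0 ≤ e n) (hnorm : ∀ n, ‖e n‖ = 1)
    (hstep : ∀ n, e n * e (n + 1) = e (n + 1)) :
    (∀ n, (stateKSet (e n)).Nonempty) ∧
    (∀ n, stateKSet (e (n + 1)) ⊆ stateKSet (e n)) ∧
    (∀ n, IsCompact (stateKSet (e n))) ∧
    (∀ n, stateKSet (e n) ⊆ stateSetW) ∧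
    (∀ n, ∀ f g h : WeakDual ℂ A, f ∈ stateSetW → g ∈ stateSetW → h ∈ stateKSet (e n) →
      ∀ t : ℝ, 0 < t → t < 1 →
        (∀ x : A, h x = (t : ℂ) * f x + (((1 - t : ℝ)) : ℂ) * g x) →
        f ∈ stateKSet (e n) ∧ g ∈ stateKSet (e n)) ∧
    (∃ φ : WeakDual ℂ A, φ ∈ stateSetW ∧
      (∀ f g : WeakDual ℂ A, f ∈ stateSetW → g ∈ stateSetW →
        ∀ t : ℝ, 0 < t → t < 1 →
          (∀ x : A, φ x = (t : ℂ) * f x + (((1 - t : ℝ)) : ℂ) * g x) →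
          f = φ ∧ g = φ) ∧
      ∀ n, φ ∈ stateKSet (e n)) := by
  haveI ntA : Nontrivial A := nontrivial_of_ne (e 0) 0 (by
    intro h
    have := hnorm 0
    rw [h, norm_zero] at this
    exact one_ne_zero this.symm)
  have honeA : ‖(1:A)‖ = 1 := norm_one
  -- membership in the state space
  have hfone : ∀ n, ∀ f : WeakDual ℂ A, f ∈ stateKSet (e n) → f 1 = 1 := by
    intro n f hf
    obtain ⟨hb, hp, hfe⟩ := hf
    exact StateAux2.apply_eq_one_of_le f hb hp hfe
      (StateAux2.le_one_of_norm_le_one (hpos n) (hnorm n)) (le_of_eq honeA)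
  have hsub : ∀ n, stateKSet (e n) ⊆ stateSetW := fun n f hf =>
    ⟨hf.1, hf.2.1, hfone n f hf⟩
  -- decreasing
  have hdec : ∀ n, stateKSet (e (n + 1)) ⊆ stateKSet (e n) := by
    intro n f hf
    obtain ⟨hb, hp, hfe⟩ := hf
    refine ⟨hb, hp, ?_⟩
    have hle : e (n + 1) ≤ e n :=
      StateAux2.le_of_absorb (hpos (n+1)) (hpos n) (hnorm (n+1)) (hnorm n) (hstep n)
    exact StateAux2.apply_eq_one_of_le f hb hp hfe hle (le_of_eq (hnorm n))
  -- closed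
  have hclosed : ∀ b : A, IsClosed (stateKSet b) := by
    intro b
    have h1 : IsClosed {f : WeakDual ℂ A | ∀ a : A, ‖f a‖ ≤ ‖a‖} := by
      have heq : {f : WeakDual ℂ A | ∀ a : A, ‖f a‖ ≤ ‖a‖} =
          ⋂ a : A, {f : WeakDual ℂ A | ‖f a‖ ≤ ‖a‖} := by
        ext f; simp
      rw [heq]
      exact isClosed_iInter fun a =>
        isClosed_le ((WeakDual.eval_continuous a).norm) continuous_const
    have h2 : IsClosed {f : WeakDual ℂ A | ∀ a : A, 0 ≤ a → 0 ≤ f a} := by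
      have heq : {f : WeakDual ℂ A | ∀ a : A, 0 ≤ a → 0 ≤ f a} =
          ⋂ (a : A) (_ : 0 ≤ a), (fun f : WeakDual ℂ A => f a) ⁻¹' {z : ℂ | 0 ≤ z} := by
        ext f; simp
      rw [heq]
      exact isClosed_iInter fun a => isClosed_iInter fun _ =>
        StateAux.isClosed_nonnegC.preimage (WeakDual.eval_continuous a)
    have h3 : IsClosed {f : WeakDual ℂ A | f b = 1} :=
      isClosed_eq (WeakDual.eval_continuous b) continuous_const
    exact h1.inter (h2.inter h3)
  -- compact
  have hcompact : ∀ b : A, IsCompact (stateKSet b) := by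
    intro b
    refine IsCompact.of_isClosed_subset (WeakDual.isCompact_closedBall (𝕜 := ℂ) (E := A) 0 1)
      (hclosed b) ?_
    intro f hf
    rw [Set.mem_preimage, mem_closedBall_zero_iff]
    exact ContinuousLinearMap.opNorm_le_bound _ zero_le_one fun x => by
      rw [one_mul]; exact hf.1 x
  -- nonempty
  have hnonempty : ∀ n, (stateKSet (e n)).Nonempty := by
    intro n
    obtain ⟨F, hb, h1, ha⟩ := StateAux3.exists_norm_le_one_map_one (e n) (hpos n) (hnorm n) ntA
    exact ⟨F, hb, fun a ha' => StateAux.positive_of_norm_le F hb h1 ha', ha⟩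
  -- face property
  have hface : ∀ n, ∀ f g h : WeakDual ℂ A, f ∈ stateSetW → g ∈ stateSetW →
      h ∈ stateKSet (e n) → ∀ t : ℝ, 0 < t → t < 1 →
      (∀ x : A, h x = (t : ℂ) * f x + (((1 - t : ℝ)) : ℂ) * g x) →
      f ∈ stateKSet (e n) ∧ g ∈ stateKSet (e n) := by
    intro n f g h hfS hgS hhK t ht0 ht1 hdecomp
    obtain ⟨hfb, hfp, -⟩ := hfS
    obtain ⟨hgb, hgp, -⟩ := hgS
    set u := f (e n) with hu
    set v := g (e n) with hv
    have hu0 := hfp _ (hpos n)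
    have hv0 := hgp _ (hpos n)
    rw [Complex.le_def] at hu0 hv0
    simp only [Complex.zero_re, Complex.zero_im] at hu0 hv0
    have hure : u.re ≤ 1 := by
      calc u.re ≤ |u.re| := le_abs_self _
        _ ≤ ‖u‖ := Complex.abs_re_le_norm _
        _ ≤ 1 := by rw [← hnorm n]; exact hfb (e n)
    have hvre : v.re ≤ 1 := by
      calc v.re ≤ |v.re| := le_abs_self _
        _ ≤ ‖v‖ := Complex.abs_re_le_norm _
        _ ≤ 1 := by rw [← hnorm n]; exact hgb (e n)
    have heq := hdecomp (e n)
    rw [hhK.2.2, ← hu, ← hv] at heq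
    have heqre := congrArg Complex.re heq
    simp only [Complex.one_re, Complex.add_re, Complex.mul_re, Complex.ofReal_re,
      Complex.ofReal_im, ← hu0.2, ← hv0.2, zero_mul, mul_zero, sub_zero] at heqre
    have hu1 : u.re = 1 := le_antisymm hure (by nlinarith [hu0.1, hv0.1])
    have hv1 : v.re = 1 := le_antisymm hvre (by nlinarith [hu0.1, hv0.1])
    refine ⟨⟨hfb, hfp, ?_⟩, ⟨hgb, hgp, ?_⟩⟩
    · exact Complex.ext hu1 hu0.2.symm
    · exact Complex.ext hv1 hv0.2.symm
  -- the intersection and its extreme point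
  haveI : LocallyConvexSpace ℝ (WeakDual ℂ A) := WeakBilin.locallyConvexSpace
  set K : Set (WeakDual ℂ A) := ⋂ n, stateKSet (e n) with hKdef
  have hKne : K.Nonempty :=
    IsCompact.nonempty_iInter_of_sequence_nonempty_isCompact_isClosed
      (fun n => stateKSet (e n)) hdec hnonempty (hcompact (e 0)) (fun n => hclosed (e n))
  have hKcompact : IsCompact K :=
    IsCompact.of_isClosed_subset (hcompact (e 0))
      (isClosed_iInter fun n => hclosed (e n)) (Set.iInter_subset _ 0)
  obtain ⟨φ, hφ⟩ := hKcompact.extremePoints_nonempty hKne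
  rw [mem_extremePoints] at hφ
  obtain ⟨hφK, hφext⟩ := hφ
  have hφn : ∀ n, φ ∈ stateKSet (e n) := fun n => Set.mem_iInter.mp hφK n
  refine ⟨hnonempty, hdec, fun n => hcompact (e n), hsub, hface,
    φ, hsub 0 (hφn 0), ?_, hφn⟩
  intro f g hfS hgS t ht0 ht1 hdecomp
  have hfgK := fun n => hface n f g φ hfS hgS (hφn n) t ht0 ht1 hdecomp
  have hfK : f ∈ K := Set.mem_iInter.mpr fun n => (hfgK n).1
  have hgK : g ∈ K := Set.mem_iInter.mpr fun n => (hfgK n).2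
  have hseg : φ ∈ openSegment ℝ f g := by
    refine ⟨t, 1 - t, ht0, by linarith, by ring, ?_⟩
    apply DFunLike.ext
    intro x
    calc (t • f + (1 - t) • g) x = t • (f x) + (1 - t) • (g x) := rfl
      _ = (t : ℂ) * f x + (((1 - t : ℝ)) : ℂ) * g x := by
          rw [Complex.real_smul, Complex.real_smul]
      _ = φ x := (hdecomp x).symm
  exact hφext f hfK g hgK hseg
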